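/- Let c, D > 0 and let G be a finite Borel measure on [0,∞). Then for every t ≥ 0 and every L ∈ ℕ, 0 ≤ Σ_{l=L}^∞ (2l+1)·C_l(t,t) ≤ Σ_{l=L}^∞ (2l+1)·C_l. (Since the squared L²(Ω×S²) error of the degree-L truncated Laplace series approximation T_{H,L} to the spherical hyperbolic diffusion field T_H equals (1/(4π))·Σ_{l=L}^∞(2l+1)·C_l(t,t), this yields the truncation error bound sup_{t≥0} ‖T_H(·,t) − T_{H,L}(·,t)‖_{L²(Ω×S²)} ≤ (1/(2√π))·(Σ_{l=L}^∞(2l+1)·C_l)^{1/2}.) -/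

import Mathlib

open MeasureTheory Real Set

/-- `H̃₁(μ,t)` for the subcritical regime `0 ≤ μ < c/(2D)`. -/
noncomputable def Htilde1 (c D μ t : ℝ) : ℝ :=
  Real.exp (-(c ^ 2 * t) / (2 * D)) *
    (Real.cosh (c * t * Real.sqrt (c ^ 2 / (4 * D ^ 2) - μ ^ 2)) +
      c / (2 * D * Real.sqrt (c ^ 2 / (4 * D ^ 2) - μ ^ 2)) *
        Real.sinh (c * t * Real.sqrt (c ^ 2 / (4 * D ^ 2) - μ ^ 2)))

/-- `H̃₂(μ,t)` for the supercritical regime `μ > c/(2D)`. -/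
noncomputable def Htilde2 (c D μ t : ℝ) : ℝ :=
  Real.exp (-(c ^ 2 * t) / (2 * D)) *
    (Real.cos (c * t * Real.sqrt (μ ^ 2 - c ^ 2 / (4 * D ^ 2))) +
      c / (2 * D * Real.sqrt (μ ^ 2 - c ^ 2 / (4 * D ^ 2))) *
        Real.sin (c * t * Real.sqrt (μ ^ 2 - c ^ 2 / (4 * D ^ 2))))

/-- `H̃(μ,t)`, pieced together from `H̃₁`, the value at `μ = c/(2D)`, and `H̃₂`. -/
noncomputable def Htilde (c D μ t : ℝ) : ℝ :=
  if μ < c / (2 * D) then Htilde1 c D μ t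
  else if μ = c / (2 * D) then Real.exp (-(c ^ 2 * t) / (2 * D)) * (1 + c ^ 2 * t / (2 * D))
  else Htilde2 c D μ t

/-- Bessel function of the first kind of real order `ν`, via its power series
(with real powers; for `ν > 0` this gives `besselJ ν 0 = 0`). -/
noncomputable def besselJ (ν x : ℝ) : ℝ :=
  ∑' n : ℕ, ((-1 : ℝ) ^ n / (n.factorial * Real.Gamma ((n : ℝ) + ν + 1))) *
    (x / 2) ^ (2 * (n : ℝ) + ν)

/-- The integrand `J_{l+1/2}(μ)² / μ`, with its value at `μ = 0` defined by
continuous extension (`2/π` for `l = 0`, `0` for `l ≥ 1`). -/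
noncomputable def besselInt (l : ℕ) (μ : ℝ) : ℝ :=
  if μ = 0 then (if l = 0 then 2 / Real.pi else 0)
  else besselJ ((l : ℝ) + 1 / 2) μ ^ 2 / μ

/-- Angular power spectrum `C_l(t,t')` of the spherical hyperbolic diffusion field. -/
noncomputable def Cl (c D : ℝ) (G : MeasureTheory.Measure ℝ) (l : ℕ) (t t' : ℝ) : ℝ :=
  2 * Real.pi ^ 2 * ∫ μ in Set.Ici (0 : ℝ), besselInt l μ * Htilde c D μ t * Htilde c D μ t' ∂G

lemma L2 (x r : ℝ) (hx : 0 ≤ x) (hr : 0 ≤ r) :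
    |Real.cos x + r * Real.sin x| ≤ Real.exp (r * x) := by
  rw [abs_le]
  constructor
  · rcases le_total x π with h | h
    · have h1 : 0 ≤ Real.sin x := Real.sin_nonneg_of_nonneg_of_le_pi hx h
      have h2 : (-1 : ℝ) ≤ Real.cos x := Real.neg_one_le_cos x
      have h3 : (1:ℝ) ≤ Real.exp (r*x) := by
        rw [← Real.exp_zero]; exact Real.exp_le_exp.2 (by positivity)
      nlinarith
    · have h1 : (-1 : ℝ) ≤ Real.sin x := Real.neg_one_le_sin x
      have h2 : (-1 : ℝ) ≤ Real.cos x := Real.neg_one_le_cos x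
      have hπ : (1:ℝ) ≤ π := by linarith [Real.pi_gt_three]
      have h3 : r * x + 1 ≤ Real.exp (r*x) := Real.add_one_le_exp _
      have : r * π ≤ r * x := by nlinarith
      nlinarith
  · have h1 : Real.sin x ≤ x := Real.sin_le hx
    have h2 : Real.cos x ≤ 1 := Real.cos_le_one x
    have h3 : r * x + 1 ≤ Real.exp (r*x) := Real.add_one_le_exp _
    nlinarith

lemma L1 (s m : ℝ) (hs : 0 ≤ s) (hm : 1 ≤ m) :
    Real.cosh s + m * Real.sinh s ≤ Real.exp (m * s) := by
  set F : ℝ → ℝ := fun u => Real.exp (m * u) - Real.cosh u - m * Real.sinh u with hF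
  have hd : ∀ u : ℝ, HasDerivAt F (m * Real.exp (m * u) - Real.sinh u - m * Real.cosh u) u := by
    intro u
    have h1 : HasDerivAt (fun u : ℝ => Real.exp (m * u)) (Real.exp (m*u) * m) u :=
      (Real.hasDerivAt_exp (m*u)).comp u (by simpa using (hasDerivAt_id u).const_mul m)
    have := ((h1.sub (Real.hasDerivAt_cosh u)).sub ((Real.hasDerivAt_sinh u).const_mul m))
    exact this.congr_deriv (by ring)
  have hmono : MonotoneOn F (Ici (0:ℝ)) := by
    apply monotoneOn_of_deriv_nonneg (convex_Ici 0)
      (Continuous.continuousOn (by continuity))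
      (fun u hu => (hd u).differentiableAt.differentiableWithinAt)
    intro u hu
    rw [(hd u).deriv]
    have hu0 : 0 < u := by simpa using hu
    have h1 : Real.exp u ≤ Real.exp (m * u) := Real.exp_le_exp.2 (by nlinarith)
    have h2 : Real.sinh u ≥ 0 := by positivity
    have h3 : Real.cosh u + Real.sinh u = Real.exp u := Real.cosh_add_sinh u
    nlinarith
  have h0 : F 0 ≤ F s := hmono (self_mem_Ici) hs hs
  simp [hF] at h0 ⊢
  nlinarith [h0]

lemma Htilde_zero (c D μ : ℝ) : Htilde c D μ 0 = 1 := by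
  unfold Htilde Htilde1 Htilde2
  split_ifs <;> simp

lemma abs_Htilde_le_one {c D : ℝ} (hc : 0 < c) (hD : 0 < D) {μ t : ℝ}
    (hμ : 0 ≤ μ) (ht : 0 ≤ t) : |Htilde c D μ t| ≤ 1 := by
  have hk : 0 < c / (2 * D) := by positivity
  unfold Htilde
  split_ifs with h1 h2
  · -- subcritical
    unfold Htilde1
    set b := Real.sqrt (c ^ 2 / (4 * D ^ 2) - μ ^ 2) with hb
    have hbpos : 0 < b := by
      apply Real.sqrt_pos.2
      have h2 : μ ^ 2 < (c / (2*D)) ^ 2 := by nlinarith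
      have e : (c / (2*D))^2 = c^2/(4*D^2) := by
        field_simp; ring
      nlinarith [h2, e]
    have hble : b ≤ c / (2 * D) := by
      rw [hb]
      have : c ^ 2 / (4 * D ^ 2) - μ ^ 2 ≤ (c / (2*D))^2 := by
        have e : (c / (2*D))^2 = c^2/(4*D^2) := by field_simp; ring
        nlinarith
      calc Real.sqrt (c ^ 2 / (4 * D ^ 2) - μ ^ 2) ≤ Real.sqrt ((c/(2*D))^2) :=
            Real.sqrt_le_sqrt this
        _ = c / (2*D) := Real.sqrt_sq hk.le
    set m := c / (2 * D * b) with hm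
    set s := c * t * b with hs
    have hs0 : 0 ≤ s := by positivity
    have hm1 : 1 ≤ m := by
      rw [hm, le_div_iff₀ (by positivity)]
      rw [le_div_iff₀ (by positivity : (0:ℝ) < 2*D)] at hble
      nlinarith [hble]
    have harg : -(c ^ 2 * t) / (2 * D) = -(m * s) := by
      rw [hm, hs]; field_simp
    rw [harg]
    have hnn : 0 ≤ Real.exp (-(m*s)) * (Real.cosh s + m * Real.sinh s) := by
      have : 0 ≤ Real.sinh s := Real.sinh_nonneg_iff.2 hs0
      have : 0 ≤ Real.cosh s := (Real.cosh_pos s).le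
      positivity
    have hub : Real.exp (-(m*s)) * (Real.cosh s + m * Real.sinh s) ≤ 1 := by
      calc Real.exp (-(m*s)) * (Real.cosh s + m * Real.sinh s)
          ≤ Real.exp (-(m*s)) * Real.exp (m*s) :=
            mul_le_mul_of_nonneg_left (L1 s m hs0 hm1) (Real.exp_pos _).le
        _ = 1 := by rw [← Real.exp_add]; simp
    rw [abs_le]; constructor <;> linarith
  · -- critical
    have hy : 0 ≤ c ^ 2 * t / (2 * D) := by positivity
    have harg : -(c ^ 2 * t) / (2 * D) = -(c ^ 2 * t / (2 * D)) := by ring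
    rw [harg]
    have hub : Real.exp (-(c ^ 2 * t / (2 * D))) * (1 + c ^ 2 * t / (2 * D)) ≤ 1 := by
      have h3 : c ^ 2 * t / (2 * D) + 1 ≤ Real.exp (c ^ 2 * t / (2 * D)) :=
        Real.add_one_le_exp _
      calc Real.exp (-(c ^ 2 * t / (2 * D))) * (1 + c ^ 2 * t / (2 * D))
          ≤ Real.exp (-(c ^ 2 * t / (2 * D))) * Real.exp (c ^ 2 * t / (2 * D)) :=
            mul_le_mul_of_nonneg_left (by linarith) (Real.exp_pos _).le
        _ = 1 := by rw [← Real.exp_add]; simp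
    have hnn : 0 ≤ Real.exp (-(c ^ 2 * t / (2 * D))) * (1 + c ^ 2 * t / (2 * D)) := by
      positivity
    rw [abs_le]; constructor <;> linarith
  · -- supercritical
    unfold Htilde2
    have hμk : c / (2 * D) < μ := lt_of_le_of_ne (not_lt.1 h1) (Ne.symm h2)
    set g := Real.sqrt (μ ^ 2 - c ^ 2 / (4 * D ^ 2)) with hg
    have hgpos : 0 < g := by
      apply Real.sqrt_pos.2
      have e : (c / (2*D))^2 = c^2/(4*D^2) := by field_simp; ring
      nlinarith [hμk, hk]
    set r := c / (2 * D * g) with hr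
    set x := c * t * g with hx
    have hx0 : 0 ≤ x := by positivity
    have hr0 : 0 ≤ r := by positivity
    have harg : -(c ^ 2 * t) / (2 * D) = -(r * x) := by
      rw [hr, hx]; field_simp
    rw [harg, abs_mul, Real.abs_exp]
    calc Real.exp (-(r*x)) * |Real.cos x + r * Real.sin x|
        ≤ Real.exp (-(r*x)) * Real.exp (r*x) :=
          mul_le_mul_of_nonneg_left (L2 x r hx0 hr0) (Real.exp_pos _).le
      _ = 1 := by rw [← Real.exp_add]; simp

lemma gamma_onehalf : Real.Gamma ((0:ℝ) + 1/2) = Real.sqrt π := by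
  rw [zero_add, show (1/2 : ℝ) = 2⁻¹ by norm_num, ← Real.Gamma_one_half_eq]
  norm_num

lemma gamma_half_formula : ∀ n : ℕ,
    Real.Gamma ((n : ℝ) + 1/2) = Real.sqrt π * (2*n).factorial / (4^n * n.factorial) := by
  intro n
  induction n with
  | zero => rw [Nat.cast_zero, gamma_onehalf]; simp
  | succ n ih =>
    have h1 : ((n:ℝ) + 1/2) ≠ 0 := by positivity
    have e : ((n+1 : ℕ) : ℝ) + 1/2 = ((n:ℝ) + 1/2) + 1 := by push_cast; ring
    rw [e, Real.Gamma_add_one h1, ih]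
    have e1 : (2*(n+1)).factorial = (2*n+2) * ((2*n+1) * (2*n).factorial) := by
      have h2 : 2*(n+1) = (2*n+1) + 1 := by ring
      rw [h2, Nat.factorial_succ, Nat.factorial_succ]
    have e2 : (n+1).factorial = (n+1) * n.factorial := Nat.factorial_succ n
    rw [e1, e2]
    push_cast
    have hf : (0:ℝ) < n.factorial := by positivity
    have h4 : (0:ℝ) < (4:ℝ)^n := by positivity
    field_simp
    ring

lemma gamma_half_ge : ∀ n : ℕ, Real.sqrt π / 2 ≤ Real.Gamma ((n : ℝ) + 1/2) := by
  have hπ : 0 < Real.sqrt π := Real.sqrt_pos.2 Real.pi_pos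
  intro n
  induction n with
  | zero => rw [Nat.cast_zero, gamma_onehalf]; linarith
  | succ n ih =>
    have h1 : ((n:ℝ) + 1/2) ≠ 0 := by positivity
    have e : ((n+1 : ℕ) : ℝ) + 1/2 = ((n:ℝ) + 1/2) + 1 := by push_cast; ring
    rw [e, Real.Gamma_add_one h1]
    rcases Nat.eq_zero_or_pos n with h | h
    · subst h
      rw [Nat.cast_zero, gamma_onehalf]
      norm_num
      linarith
    · have hn1 : (1:ℝ) ≤ (n:ℝ) + 1/2 := by
        have : (1:ℝ) ≤ (n:ℝ) := by exact_mod_cast h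
        linarith
      nlinarith [ih]

noncomputable def bterm (ν x : ℝ) (n : ℕ) : ℝ :=
  ((-1 : ℝ) ^ n / (n.factorial * Real.Gamma ((n : ℝ) + ν + 1))) *
    (x / 2) ^ (2 * (n : ℝ) + ν)

lemma besselJ_eq_tsum (ν x : ℝ) : besselJ ν x = ∑' n : ℕ, bterm ν x n := rfl


lemma cast_shift (k n : ℕ) : (n:ℝ) + ((k:ℝ) - 1/2) + 1 = ((n+k : ℕ):ℝ) + 1/2 := by
  push_cast; ring

lemma gamma_shift_ge (k n : ℕ) :
    Real.sqrt π / 2 ≤ Real.Gamma ((n:ℝ) + ((k:ℝ) - 1/2) + 1) := by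
  rw [cast_shift]; exact gamma_half_ge _

lemma rpow_split {x : ℝ} (hx : 0 < x) (ν : ℝ) (n : ℕ) :
    (x/2) ^ (2 * (n : ℝ) + ν) = ((x/2)^2)^n * (x/2) ^ ν := by
  have hx2 : (0:ℝ) < x/2 := by linarith
  rw [Real.rpow_add hx2]
  congr 1
  rw [show (2 * (n:ℝ)) = ((2*n : ℕ) : ℝ) by push_cast; ring, Real.rpow_natCast, pow_mul]

lemma bterm_norm_le {x : ℝ} (hx : 0 < x) (k : ℕ) (n : ℕ) :
    ‖bterm ((k:ℝ) - 1/2) x n‖ ≤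
      ((x/2) ^ ((k:ℝ) - 1/2) * (2 / Real.sqrt π)) * (((x/2)^2)^n / n.factorial) := by
  have hx2 : (0:ℝ) < x/2 := by linarith
  have hπ : 0 < Real.sqrt π := Real.sqrt_pos.2 Real.pi_pos
  have hΓ : Real.sqrt π / 2 ≤ Real.Gamma ((n:ℝ) + ((k:ℝ) - 1/2) + 1) := gamma_shift_ge k n
  have hΓ0 : 0 < Real.Gamma ((n:ℝ) + ((k:ℝ) - 1/2) + 1) := lt_of_lt_of_le (by positivity) hΓ
  have hf : (0:ℝ) < n.factorial := by positivity
  set Γ := Real.Gamma ((n:ℝ) + ((k:ℝ) - 1/2) + 1) with hΓdef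
  set P := ((x/2)^2)^n with hP
  set Q := (x/2) ^ ((k:ℝ) - 1/2) with hQ
  have hPpos : 0 < P := by positivity
  have hQpos : 0 < Q := Real.rpow_pos_of_pos hx2 _
  have hnorm : ‖bterm ((k:ℝ) - 1/2) x n‖ = (1 / ((n.factorial : ℝ) * Γ)) * (P * Q) := by
    rw [bterm, Real.norm_eq_abs, abs_mul, abs_div, abs_pow, abs_neg, abs_one, one_pow,
      abs_of_pos (by positivity : (0:ℝ) < (n.factorial : ℝ) * Γ),
      abs_of_pos (Real.rpow_pos_of_pos hx2 _), rpow_split hx]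
  rw [hnorm]
  have key : 1 / ((n.factorial : ℝ) * Γ) ≤ 2 / (Real.sqrt π * n.factorial) := by
    rw [div_le_div_iff₀ (by positivity) (by positivity)]
    nlinarith [hΓ, hf, hπ]
  calc (1 / ((n.factorial : ℝ) * Γ)) * (P * Q)
      ≤ (2 / (Real.sqrt π * n.factorial)) * (P * Q) :=
        mul_le_mul_of_nonneg_right key (by positivity)
    _ = (Q * (2 / Real.sqrt π)) * (P / n.factorial) := by
        field_simp
  

lemma bterm_summable {x : ℝ} (hx : 0 < x) (k : ℕ) : Summable (bterm ((k:ℝ) - 1/2) x) :=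
  Summable.of_norm_bounded
    ((Real.summable_pow_div_factorial ((x/2)^2)).mul_left _) (bterm_norm_le hx k)

lemma gamma_pos_shift (k n : ℕ) : 0 < Real.Gamma ((n:ℝ) + ((k:ℝ) - 1/2) + 1) := by
  have hπ : 0 < Real.sqrt π := Real.sqrt_pos.2 Real.pi_pos
  linarith [gamma_shift_ge k n]

lemma bterm_diff (k n : ℕ) {x : ℝ} (hx : 0 < x) :
    (2 * ((k:ℝ) + 1/2) / x) * bterm ((k:ℝ) + 1/2) x n - bterm ((k:ℝ) + 1/2 - 1) x n =
      ((-1:ℝ)^n * (-(n:ℝ)) / (n.factorial * Real.Gamma ((n:ℝ) + ((k:ℝ) + 1/2) + 1))) *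
        (x/2) ^ (2*(n:ℝ) + ((k:ℝ) + 1/2) - 1) := by
  set ν : ℝ := (k:ℝ) + 1/2 with hν
  have hx2 : (0:ℝ) < x/2 := by linarith
  have hnν : (0:ℝ) < (n:ℝ) + ν := by positivity
  have hA : 0 < Real.Gamma ((n:ℝ) + ν) := Real.Gamma_pos_of_pos hnν
  have hf : (0:ℝ) < n.factorial := by positivity
  have hΓ1 : Real.Gamma ((n:ℝ) + ν + 1) = ((n:ℝ)+ν) * Real.Gamma ((n:ℝ)+ν) :=
    Real.Gamma_add_one hnν.ne'
  have e1 : (x/2) ^ (2*(n:ℝ) + ν) = (x/2) ^ (2*(n:ℝ) + ν - 1) * (x/2) := by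
    rw [← Real.rpow_add_one hx2.ne' (2*(n:ℝ) + ν - 1)]
    congr 1
    ring
  have e2 : (2:ℝ)*(n:ℝ) + (ν - 1) = 2*(n:ℝ) + ν - 1 := by ring
  have e3 : ((n:ℝ)) + (ν - 1) + 1 = (n:ℝ) + ν := by ring
  rw [bterm, bterm, e1, e2, e3, hΓ1]
  set R := (x/2) ^ (2*(n:ℝ) + ν - 1) with hR
  have hxne : x ≠ 0 := hx.ne'
  field_simp
  ring

lemma bterm_diff_zero (k : ℕ) {x : ℝ} (hx : 0 < x) :
    (2 * ((k:ℝ) + 1/2) / x) * bterm ((k:ℝ) + 1/2) x 0 - bterm ((k:ℝ) + 1/2 - 1) x 0 = 0 := by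
  rw [bterm_diff k 0 hx]
  simp

lemma bterm_diff_succ (k n : ℕ) {x : ℝ} (hx : 0 < x) :
    (2 * ((k:ℝ) + 1/2) / x) * bterm ((k:ℝ) + 1/2) x (n+1) - bterm ((k:ℝ) + 1/2 - 1) x (n+1) =
      bterm ((k:ℝ) + 1/2 + 1) x n := by
  rw [bterm_diff k (n+1) hx, bterm]
  have eΓ : ((n+1:ℕ):ℝ) + ((k:ℝ)+1/2) + 1 = (n:ℝ) + ((k:ℝ)+1/2+1) + 1 := by push_cast; ring
  have eE : 2*((n+1:ℕ):ℝ) + ((k:ℝ)+1/2) - 1 = 2*(n:ℝ) + ((k:ℝ)+1/2+1) := by push_cast; ring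
  rw [eΓ, eE]
  have hA : 0 < Real.Gamma ((n:ℝ) + ((k:ℝ)+1/2+1) + 1) := by
    apply Real.Gamma_pos_of_pos; positivity
  have ef : ((n+1:ℕ).factorial : ℝ) = ((n:ℝ)+1) * (n.factorial : ℝ) := by
    rw [Nat.factorial_succ]; push_cast; ring
  rw [pow_succ, ef]
  have hf : (0:ℝ) < n.factorial := by positivity
  have hn1 : ((n:ℝ)+1) ≠ 0 := by positivity
  field_simp
  push_cast; ring

lemma bessel_recur (k : ℕ) {x : ℝ} (hx : 0 < x) :
    besselJ ((k:ℝ) + 1/2 + 1) x =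
      (2 * ((k:ℝ) + 1/2) / x) * besselJ ((k:ℝ) + 1/2) x - besselJ ((k:ℝ) + 1/2 - 1) x := by
  have ec1 : ((k+1:ℕ):ℝ) - 1/2 = (k:ℝ) + 1/2 := by push_cast; ring
  have ec2 : ((k:ℕ):ℝ) - 1/2 = (k:ℝ) + 1/2 - 1 := by push_cast; ring
  have h1 : Summable (bterm ((k:ℝ) + 1/2) x) := ec1 ▸ bterm_summable hx (k+1)
  have h2 : Summable (bterm ((k:ℝ) + 1/2 - 1) x) := ec2 ▸ bterm_summable hx k
  have h1' : Summable (fun n => (2 * ((k:ℝ) + 1/2) / x) * bterm ((k:ℝ) + 1/2) x n) :=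
    h1.mul_left _
  have hU : Summable (fun n => (2 * ((k:ℝ) + 1/2) / x) * bterm ((k:ℝ) + 1/2) x n
      - bterm ((k:ℝ) + 1/2 - 1) x n) := h1'.sub h2
  rw [besselJ_eq_tsum, besselJ_eq_tsum, besselJ_eq_tsum, ← tsum_mul_left,
    ← h1'.tsum_sub h2, hU.tsum_eq_zero_add, bterm_diff_zero k hx, zero_add]
  exact tsum_congr fun n => (bterm_diff_succ k n hx).symm

lemma besselJ_neg_half {x : ℝ} (hx : 0 < x) :
    besselJ (-(1/2) : ℝ) x = ((x/2) ^ (-(1/2) : ℝ) / Real.sqrt π) * Real.cos x := by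
  rw [besselJ_eq_tsum, Real.cos_eq_tsum, ← tsum_mul_left]
  apply tsum_congr
  intro n
  rw [bterm]
  have eΓ : (n:ℝ) + (-(1/2):ℝ) + 1 = (n:ℝ) + 1/2 := by ring
  rw [eΓ, gamma_half_formula n, rpow_split hx]
  have ep : ((x/2)^2)^n = x^(2*n) / 4^n := by
    rw [show ((x/2)^2 : ℝ) = x^2/4 by ring, div_pow, ← pow_mul]
  rw [ep]
  have hπ : 0 < Real.sqrt π := Real.sqrt_pos.2 Real.pi_pos
  have hf : (0:ℝ) < n.factorial := by positivity
  have hf2 : (0:ℝ) < (2*n).factorial := by positivity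
  have h4 : (0:ℝ) < (4:ℝ)^n := by positivity
  field_simp

lemma besselJ_half {x : ℝ} (hx : 0 < x) :
    besselJ ((1/2) : ℝ) x = (2 * (x/2) ^ ((1/2) : ℝ) / (Real.sqrt π * x)) * Real.sin x := by
  rw [besselJ_eq_tsum, Real.sin_eq_tsum, ← tsum_mul_left]
  apply tsum_congr
  intro n
  rw [bterm]
  have eΓ : (n:ℝ) + ((1/2):ℝ) + 1 = ((n+1:ℕ):ℝ) + 1/2 := by push_cast; ring
  rw [eΓ, gamma_half_formula (n+1), rpow_split hx]
  have ep : ((x/2)^2)^n = x^(2*n) / 4^n := by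
    rw [show ((x/2)^2 : ℝ) = x^2/4 by ring, div_pow, ← pow_mul]
  have ef1 : ((2*(n+1)).factorial : ℝ) = (2*(n:ℝ)+2) * ((2*n+1).factorial : ℝ) := by
    rw [show 2*(n+1) = (2*n+1) + 1 by ring, Nat.factorial_succ]
    push_cast
    ring
  have ef2 : ((n+1).factorial : ℝ) = ((n:ℝ)+1) * (n.factorial : ℝ) := by
    rw [Nat.factorial_succ]; push_cast; ring
  have ex : x^(2*n+1) = x^(2*n) * x := pow_succ x (2*n)
  rw [ep, ef1, ef2, ex, pow_succ]
  have hπ : 0 < Real.sqrt π := Real.sqrt_pos.2 Real.pi_pos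
  have hf : (0:ℝ) < n.factorial := by positivity
  have hf2 : (0:ℝ) < ((2*n+1).factorial : ℝ) := by positivity
  have h4 : (0:ℝ) < (4:ℝ)^n := by positivity
  have hn1 : ((n:ℝ)+1) ≠ 0 := by positivity
  have h2n : (2*(n:ℝ)+2) ≠ 0 := by positivity
  have h2n1 : (2*(n:ℝ)+1) ≠ 0 := by positivity
  field_simp
  ring

lemma besselJ_B0_bound {x : ℝ} (hx1 : 1 ≤ x) : |besselJ (((0:ℕ):ℝ) - 1/2) x| ≤ 1 := by
  have hx : (0:ℝ) < x := by linarith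
  rw [show ((0:ℕ):ℝ) - 1/2 = -(1/2) by norm_num, besselJ_neg_half hx]
  have hx2 : (0:ℝ) < x/2 := by linarith
  set q := (x/2) ^ (-(1/2) : ℝ) with hq
  have hqpos : 0 < q := Real.rpow_pos_of_pos hx2 _
  have hq2 : q * q = 2/x := by
    rw [hq, ← Real.rpow_add hx2, show (-(1/2) + -(1/2) : ℝ) = -1 by norm_num,
      Real.rpow_neg_one]
    field_simp
  have hπ : 0 < Real.sqrt π := Real.sqrt_pos.2 Real.pi_pos
  have hπ2 : Real.sqrt π * Real.sqrt π = π := Real.mul_self_sqrt Real.pi_pos.le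
  have hq2' : q * q ≤ 2 := by
    rw [hq2]; exact div_le_self (by norm_num) hx1
  have hqle : q ≤ Real.sqrt π := by
    by_contra hcon
    push_neg at hcon
    have h1 : Real.sqrt π * Real.sqrt π < q * Real.sqrt π := mul_lt_mul_of_pos_right hcon hπ
    have h2 : q * Real.sqrt π ≤ q * q := mul_le_mul_of_nonneg_left hcon.le hqpos.le
    nlinarith [Real.pi_gt_three]
  rw [abs_mul, abs_div, abs_of_pos hqpos, abs_of_pos hπ]
  calc q / Real.sqrt π * |Real.cos x| ≤ q / Real.sqrt π * 1 := by
        apply mul_le_mul_of_nonneg_left (Real.abs_cos_le_one x) (by positivity)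
    _ ≤ 1 := by rw [mul_one, div_le_one hπ]; exact hqle

lemma besselJ_B1_bound {x : ℝ} (hx1 : 1 ≤ x) : |besselJ (((1:ℕ):ℝ) - 1/2) x| ≤ 1 := by
  have hx : (0:ℝ) < x := by linarith
  rw [show ((1:ℕ):ℝ) - 1/2 = (1/2 : ℝ) by norm_num, besselJ_half hx]
  have hx2 : (0:ℝ) < x/2 := by linarith
  set s := (x/2) ^ ((1/2) : ℝ) with hs
  have hspos : 0 < s := Real.rpow_pos_of_pos hx2 _
  have hs2 : s * s = x/2 := by
    rw [hs, ← Real.rpow_add hx2, show ((1/2) + (1/2) : ℝ) = 1 by norm_num, Real.rpow_one]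
  have hπ : 0 < Real.sqrt π := Real.sqrt_pos.2 Real.pi_pos
  have hπ2 : Real.sqrt π * Real.sqrt π = π := Real.mul_self_sqrt Real.pi_pos.le
  have hkey : 2 * s ≤ Real.sqrt π * x := by
    by_contra hcon
    push_neg at hcon
    have hsx : 0 < Real.sqrt π * x := by positivity
    have h1 : (Real.sqrt π * x) * (Real.sqrt π * x) < (2*s) * (Real.sqrt π * x) :=
      mul_lt_mul_of_pos_right hcon hsx
    have h2 : (2*s) * (Real.sqrt π * x) < (2*s) * (2*s) :=
      mul_lt_mul_of_pos_left hcon (by positivity)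
    have h3 : (2*s) * (2*s) = 2 * x := by nlinarith [hs2]
    have h0 : (Real.sqrt π * x) * (Real.sqrt π * x) = π * (x*x) := by
      rw [show (Real.sqrt π * x) * (Real.sqrt π * x) = (Real.sqrt π * Real.sqrt π) * (x*x) by ring, hπ2]
    have h4 : x ≤ x * x := by nlinarith [hx1]
    have h5 : 3 * (x*x) ≤ π * (x*x) := by nlinarith [Real.pi_gt_three]
    nlinarith [Real.pi_gt_three, hx1]
  rw [abs_mul, abs_div, abs_of_pos (by positivity : (0:ℝ) < 2*s),
    abs_of_pos (by positivity : (0:ℝ) < Real.sqrt π * x)]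
  calc 2*s / (Real.sqrt π * x) * |Real.sin x| ≤ 2*s/(Real.sqrt π * x) * 1 := by
        apply mul_le_mul_of_nonneg_left (Real.abs_sin_le_one x) (by positivity)
    _ ≤ 1 := by rw [mul_one, div_le_one (by positivity)]; exact hkey

lemma bessel_bounded : ∀ k : ℕ, ∃ C : ℝ, 0 ≤ C ∧ ∀ x : ℝ, 1 ≤ x →
    |besselJ ((k:ℝ) - 1/2) x| ≤ C ∧ |besselJ (((k+1:ℕ):ℝ) - 1/2) x| ≤ C := by
  intro k
  induction k with
  | zero =>
    exact ⟨1, zero_le_one, fun x hx => ⟨besselJ_B0_bound hx, besselJ_B1_bound hx⟩⟩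
  | succ k ih =>
    obtain ⟨C, hC0, hC⟩ := ih
    refine ⟨(2*(k:ℝ)+1)*C + C, by positivity, fun x hx => ⟨?_, ?_⟩⟩
    · have := (hC x hx).2
      have h2 : C ≤ (2*(k:ℝ)+1)*C + C := by nlinarith
      exact le_trans this h2
    · have hx0 : (0:ℝ) < x := by linarith
      have e2 : ((k+1+1:ℕ):ℝ) - 1/2 = (k:ℝ) + 1/2 + 1 := by push_cast; ring
      have e1 : ((k+1:ℕ):ℝ) - 1/2 = (k:ℝ) + 1/2 := by push_cast; ring
      have e0 : ((k:ℕ):ℝ) - 1/2 = (k:ℝ) + 1/2 - 1 := by push_cast; ring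
      rw [e2, bessel_recur k hx0]
      have hJ1 : |besselJ ((k:ℝ) + 1/2) x| ≤ C := e1 ▸ (hC x hx).2
      have hJ0 : |besselJ ((k:ℝ) + 1/2 - 1) x| ≤ C := e0 ▸ (hC x hx).1
      have hcoef : |2 * ((k:ℝ) + 1/2) / x| ≤ 2*(k:ℝ)+1 := by
        rw [abs_div, abs_of_nonneg (by positivity : (0:ℝ) ≤ 2*((k:ℝ)+1/2)),
          abs_of_pos hx0, div_le_iff₀ hx0]
        nlinarith
      calc |2 * ((k:ℝ) + 1/2) / x * besselJ ((k:ℝ) + 1/2) x - besselJ ((k:ℝ) + 1/2 - 1) x|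
          ≤ |2 * ((k:ℝ) + 1/2) / x * besselJ ((k:ℝ) + 1/2) x| + |besselJ ((k:ℝ) + 1/2 - 1) x| :=
            abs_sub _ _
        _ ≤ (2*(k:ℝ)+1)*C + C := by
            rw [abs_mul]
            have h1 : |2 * ((k:ℝ) + 1/2) / x| * |besselJ ((k:ℝ) + 1/2) x| ≤ (2*(k:ℝ)+1)*C :=
              mul_le_mul hcoef hJ1 (abs_nonneg _) (by positivity)
            linarith

lemma bterm_measurable (ν : ℝ) (n : ℕ) : Measurable (fun x : ℝ => bterm ν x n) := by
  unfold bterm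
  fun_prop

lemma gJ_measurable (l : ℕ) :
    Measurable ((Set.Ioi (0:ℝ)).indicator (besselJ ((l:ℝ) + 1/2))) := by
  have ecast : (l:ℝ) + 1/2 = ((l+1:ℕ):ℝ) - 1/2 := by push_cast; ring
  apply measurable_of_tendsto_metrizable
    (f := fun N => (Set.Ioi (0:ℝ)).indicator
      (fun x => ∑ n ∈ Finset.range N, bterm ((l:ℝ) + 1/2) x n))
  · intro N
    exact (Finset.measurable_sum _ fun n _ => bterm_measurable _ n).indicator measurableSet_Ioi
  · rw [tendsto_pi_nhds]
    intro x
    rcases lt_or_ge 0 x with hx | hx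
    · simp only [Set.indicator_of_mem (Set.mem_Ioi.2 hx)]
      rw [besselJ_eq_tsum]
      exact ((ecast ▸ bterm_summable hx (l+1)).hasSum).tendsto_sum_nat
    · simp only [Set.indicator_of_notMem (by simpa using hx : x ∉ Set.Ioi (0:ℝ))]
      exact tendsto_const_nhds

lemma Htilde_measurable (c D t : ℝ) : Measurable (fun μ : ℝ => Htilde c D μ t) := by
  unfold Htilde
  apply Measurable.ite (measurableSet_lt measurable_id measurable_const)
  · unfold Htilde1; fun_prop
  · apply Measurable.ite (measurableSet_eq_fun measurable_id measurable_const)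
    · fun_prop
    · unfold Htilde2; fun_prop

noncomputable def besselIntAux (l : ℕ) (μ : ℝ) : ℝ :=
  if μ = 0 then (if l = 0 then 2 / Real.pi else 0)
  else ((Set.Ioi (0:ℝ)).indicator (besselJ ((l:ℝ) + 1/2)) μ) ^ 2 / μ

lemma besselIntAux_measurable (l : ℕ) : Measurable (besselIntAux l) := by
  unfold besselIntAux
  apply Measurable.ite (measurableSet_eq_fun measurable_id measurable_const) measurable_const
  exact ((gJ_measurable l).pow_const 2).div measurable_id

lemma besselIntAux_eq (l : ℕ) {μ : ℝ} (hμ : 0 ≤ μ) : besselIntAux l μ = besselInt l μ := by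
  unfold besselIntAux besselInt
  rcases eq_or_lt_of_le hμ with h | h
  · simp [← h]
  · rw [if_neg h.ne', if_neg h.ne', Set.indicator_of_mem (Set.mem_Ioi.2 h)]

lemma integrand_aesm (c D t t' : ℝ) (l : ℕ) (G : Measure ℝ) :
    AEStronglyMeasurable (fun μ => besselInt l μ * Htilde c D μ t * Htilde c D μ t')
      (G.restrict (Set.Ici 0)) := by
  have hmeas : Measurable (fun μ => besselIntAux l μ * Htilde c D μ t * Htilde c D μ t') :=
    ((besselIntAux_measurable l).mul (Htilde_measurable c D t)).mul (Htilde_measurable c D t')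
  apply hmeas.aestronglyMeasurable.congr
  filter_upwards [ae_restrict_mem measurableSet_Ici] with μ hμ
  rw [besselIntAux_eq l hμ]

noncomputable def expE : ℝ := ∑' n : ℕ, (1:ℝ) / n.factorial

lemma expE_nonneg : 0 ≤ expE := tsum_nonneg fun n => by positivity

lemma summable_one_div_factorial : Summable (fun n : ℕ => (1:ℝ) / n.factorial) := by
  simpa using Real.summable_pow_div_factorial 1

lemma besselJ_small_bound (l : ℕ) {x : ℝ} (hx : 0 < x) (hx1 : x ≤ 1) :
    |besselJ ((l:ℝ) + 1/2) x| ≤ (x/2) ^ ((1/2) : ℝ) * ((2 / Real.sqrt π) * expE) := by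
  have ecast : (l:ℝ) + 1/2 = ((l+1:ℕ):ℝ) - 1/2 := by push_cast; ring
  have hx2 : (0:ℝ) < x/2 := by linarith
  have hx2' : x/2 ≤ 1 := by linarith
  have hπ : 0 < Real.sqrt π := Real.sqrt_pos.2 Real.pi_pos
  have hsum : Summable (bterm ((l:ℝ) + 1/2) x) := ecast ▸ bterm_summable hx (l+1)
  have hptw : ∀ n : ℕ, ‖bterm ((l:ℝ) + 1/2) x n‖ ≤
      ((x/2) ^ ((1/2) : ℝ) * (2 / Real.sqrt π)) * (1 / n.factorial) := by
    intro n
    have hΓ : Real.sqrt π / 2 ≤ Real.Gamma ((n:ℝ) + ((l:ℝ) + 1/2) + 1) := by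
      rw [ecast]; exact gamma_shift_ge (l+1) n
    have hΓ0 : 0 < Real.Gamma ((n:ℝ) + ((l:ℝ) + 1/2) + 1) := by linarith
    have hf : (0:ℝ) < n.factorial := by positivity
    have hrpow : (x/2) ^ (2*(n:ℝ) + ((l:ℝ) + 1/2)) ≤ (x/2) ^ ((1/2) : ℝ) := by
      apply Real.rpow_le_rpow_of_exponent_ge hx2 hx2'
      have h1 : (0:ℝ) ≤ (n:ℝ) := Nat.cast_nonneg n
      have h2 : (0:ℝ) ≤ (l:ℝ) := Nat.cast_nonneg l
      linarith
    have hnorm : ‖bterm ((l:ℝ) + 1/2) x n‖ =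
        (1 / ((n.factorial : ℝ) * Real.Gamma ((n:ℝ) + ((l:ℝ) + 1/2) + 1))) *
          (x/2) ^ (2*(n:ℝ) + ((l:ℝ) + 1/2)) := by
      rw [bterm, Real.norm_eq_abs, abs_mul, abs_div, abs_pow, abs_neg, abs_one, one_pow,
        abs_of_pos (by positivity), abs_of_pos (Real.rpow_pos_of_pos hx2 _)]
    rw [hnorm]
    have h1 : 1 / ((n.factorial : ℝ) * Real.Gamma ((n:ℝ) + ((l:ℝ) + 1/2) + 1)) ≤
        1 / ((n.factorial : ℝ) * (Real.sqrt π / 2)) := by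
      apply one_div_le_one_div_of_le (by positivity)
      exact mul_le_mul_of_nonneg_left hΓ hf.le
    calc (1 / ((n.factorial : ℝ) * Real.Gamma ((n:ℝ) + ((l:ℝ) + 1/2) + 1))) *
          (x/2) ^ (2*(n:ℝ) + ((l:ℝ) + 1/2))
        ≤ (1 / ((n.factorial : ℝ) * (Real.sqrt π / 2))) * ((x/2) ^ ((1/2) : ℝ)) :=
          mul_le_mul h1 hrpow (Real.rpow_pos_of_pos hx2 _).le (by positivity)
      _ = ((x/2) ^ ((1/2) : ℝ) * (2 / Real.sqrt π)) * (1 / n.factorial) := by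
          field_simp
  have hnsum : Summable (fun n => ‖bterm ((l:ℝ) + 1/2) x n‖) := hsum.abs
  have hmaj : Summable (fun n : ℕ =>
      ((x/2) ^ ((1/2) : ℝ) * (2 / Real.sqrt π)) * (1 / n.factorial)) :=
    summable_one_div_factorial.mul_left _
  rw [besselJ_eq_tsum]
  calc |∑' n, bterm ((l:ℝ) + 1/2) x n| ≤ ∑' n, ‖bterm ((l:ℝ) + 1/2) x n‖ :=
        norm_tsum_le_tsum_norm hnsum
    _ ≤ ∑' n : ℕ, ((x/2) ^ ((1/2) : ℝ) * (2 / Real.sqrt π)) * (1 / n.factorial) :=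
        Summable.tsum_le_tsum hptw hnsum hmaj
    _ = (x/2) ^ ((1/2) : ℝ) * ((2 / Real.sqrt π) * expE) := by
        rw [tsum_mul_left, expE, mul_assoc]

lemma besselInt_nonneg (l : ℕ) {μ : ℝ} (hμ : 0 ≤ μ) : 0 ≤ besselInt l μ := by
  unfold besselInt
  split_ifs
  · positivity
  · exact le_refl 0
  · exact div_nonneg (sq_nonneg _) hμ

lemma besselInt_bound (l : ℕ) : ∃ B : ℝ, 0 ≤ B ∧ ∀ μ : ℝ, 0 ≤ μ → besselInt l μ ≤ B := by
  obtain ⟨C, hC0, hC⟩ := bessel_bounded (l+1)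
  have ecast : (l:ℝ) + 1/2 = ((l+1:ℕ):ℝ) - 1/2 := by push_cast; ring
  set K : ℝ := (2 / Real.sqrt π) * expE with hK
  have hπ : 0 < Real.sqrt π := Real.sqrt_pos.2 Real.pi_pos
  have hK0 : 0 ≤ K := by
    apply mul_nonneg (by positivity) expE_nonneg
  refine ⟨K^2/2 + C^2 + 2/π, by positivity, ?_⟩
  have hπpos := Real.pi_pos
  intro μ hμ
  unfold besselInt
  split_ifs with h h0
  · have h1 : (0:ℝ) ≤ K^2/2 := by positivity
    have h2 : (0:ℝ) ≤ C^2 := sq_nonneg C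
    linarith
  · positivity
  · have hμ0 : 0 < μ := lt_of_le_of_ne hμ (Ne.symm h)
    rcases le_or_gt μ 1 with hle | hgt
    · have hJ := besselJ_small_bound l hμ0 hle
      set s : ℝ := (μ/2) ^ ((1/2) : ℝ) with hs
      have hspos : 0 < s := Real.rpow_pos_of_pos (by linarith) _
      have hs2 : s * s = μ/2 := by
        rw [hs, ← Real.rpow_add (by linarith), show ((1/2) + (1/2) : ℝ) = 1 by norm_num,
          Real.rpow_one]
      have hsq : besselJ ((l:ℝ) + 1/2) μ ^ 2 ≤ (s * K)^2 := by
        have habs := abs_le.1 hJ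
        exact sq_le_sq' habs.1 habs.2
      have : besselJ ((l:ℝ) + 1/2) μ ^ 2 / μ ≤ (s*K)^2 / μ := by gcongr
      have heq : (s*K)^2 / μ = K^2/2 := by
        have hs2' : s^2 = μ/2 := by rw [sq]; exact hs2
        rw [mul_pow, hs2']
        field_simp
      have h2 : (0:ℝ) ≤ C^2 := sq_nonneg C
      have h3 : (0:ℝ) < 2/π := by positivity
      linarith [heq ▸ this]
    · have hJ : |besselJ ((l:ℝ) + 1/2) μ| ≤ C := by
        rw [ecast]; exact (hC μ hgt.le).1
      have hsq : besselJ ((l:ℝ) + 1/2) μ ^ 2 ≤ C^2 := by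
        have habs := abs_le.1 hJ
        exact sq_le_sq' habs.1 habs.2
      have h1 : besselJ ((l:ℝ) + 1/2) μ ^ 2 / μ ≤ besselJ ((l:ℝ) + 1/2) μ ^ 2 :=
        div_le_self (sq_nonneg _) hgt.le
      have h2 : (0:ℝ) ≤ K^2/2 := by positivity
      have h3 : (0:ℝ) < 2/π := by positivity
      linarith

lemma integrable_integrand {c D : ℝ} (hc : 0 < c) (hD : 0 < D) {t t' : ℝ}
    (ht : 0 ≤ t) (ht' : 0 ≤ t') (l : ℕ) (G : Measure ℝ) [IsFiniteMeasure G] :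
    Integrable (fun μ => besselInt l μ * Htilde c D μ t * Htilde c D μ t')
      (G.restrict (Set.Ici 0)) := by
  obtain ⟨B, hB0, hB⟩ := besselInt_bound l
  apply Integrable.mono' (integrable_const B) (integrand_aesm c D t t' l G)
  filter_upwards [ae_restrict_mem measurableSet_Ici] with μ hμ
  have hμ0 : (0:ℝ) ≤ μ := hμ
  have h1 := abs_Htilde_le_one hc hD hμ0 ht (c := c) (D := D) (t := t)
  have h2 := abs_Htilde_le_one hc hD hμ0 ht' (c := c) (D := D) (t := t')
  have h3 := besselInt_nonneg l hμ0
  have h4 := hB μ hμ0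
  rw [Real.norm_eq_abs, abs_mul, abs_mul, abs_of_nonneg h3]
  calc besselInt l μ * |Htilde c D μ t| * |Htilde c D μ t'|
      ≤ B * 1 * 1 := by
        apply mul_le_mul (mul_le_mul h4 h1 (abs_nonneg _) hB0) h2 (abs_nonneg _)
        positivity
    _ = B := by ring

lemma Cl_mono {c D : ℝ} (hc : 0 < c) (hD : 0 < D) {t : ℝ} (ht : 0 ≤ t)
    (l : ℕ) (G : Measure ℝ) [IsFiniteMeasure G] :
    Cl c D G l t t ≤ Cl c D G l 0 0 := by
  unfold Cl
  apply mul_le_mul_of_nonneg_left _ (by positivity)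
  apply integral_mono_ae (integrable_integrand hc hD ht ht l G)
    (integrable_integrand hc hD le_rfl le_rfl l G)
  filter_upwards [ae_restrict_mem measurableSet_Ici] with μ hμ
  have hμ0 : (0:ℝ) ≤ μ := hμ
  have h1 := abs_Htilde_le_one hc hD hμ0 ht (c := c) (D := D) (t := t)
  have h3 := besselInt_nonneg l hμ0
  rw [Htilde_zero, mul_one, mul_one]
  have habs := abs_le.1 h1
  have hsq : Htilde c D μ t * Htilde c D μ t ≤ 1 := by nlinarith [habs.1, habs.2]
  calc besselInt l μ * Htilde c D μ t * Htilde c D μ t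
      = besselInt l μ * (Htilde c D μ t * Htilde c D μ t) := by ring
    _ ≤ besselInt l μ * 1 := mul_le_mul_of_nonneg_left hsq h3
    _ = besselInt l μ := mul_one _

/-- The tail sums of the angular power spectrum satisfy
`0 ≤ Σ_{l≥L} (2l+1) C_l(t,t) ≤ Σ_{l≥L} (2l+1) C_l` for every `t ≥ 0` and every
truncation degree `L` (stated in `ℝ≥0∞`, so that it also covers possibly
divergent tail sums); this gives the truncation error bound
`‖T_H(·,t) − T_{H,L}(·,t)‖ ≤ (1/(2√π))(Σ_{l≥L}(2l+1)C_l)^{1/2}`. -/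
theorem truncation_tail_sum_le
    (c D : ℝ) (hc : 0 < c) (hD : 0 < D)
    (G : MeasureTheory.Measure ℝ) [MeasureTheory.IsFiniteMeasure G]
    (hG0 : G (Set.Iio 0) = 0) :
    ∀ t : ℝ, 0 ≤ t → ∀ L : ℕ,
      ∑' l : ℕ, ENNReal.ofReal ((2 * ((L + l : ℕ) : ℝ) + 1) * Cl c D G (L + l) t t)
        ≤ ∑' l : ℕ, ENNReal.ofReal ((2 * ((L + l : ℕ) : ℝ) + 1) * Cl c D G (L + l) 0 0) := by
  intro t ht L
  apply ENNReal.tsum_le_tsum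
  intro l
  apply ENNReal.ofReal_le_ofReal
  exact mul_le_mul_of_nonneg_left (Cl_mono hc hD ht (L + l) G) (by positivity)
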